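/- Deterministic core of Theorem 1 (prediction error bound on the good event). Suppose T ≥ 2, λ = 2 d c0 (log T / T)^{1/4} for some c0 > 0, the vector θ⁰ ∈ ℝ^{Td} has at most m0 + 1 nonzero blocks, each block satisfying ‖θ⁰_i‖ ≤ M_θ, and every entry of Zᵀ U / T has absolute value at most c0 (log T / T)^{1/4}, where U = Y − Zθ⁰. If θ̂ minimizes Q(θ) = (1/T)‖Y − Zθ‖² + λ Σ_{i=1}^T ‖θ_i‖ over ℝ^{Td}, then (1/T)‖Z(θ̂ − θ⁰)‖² ≤ 4 d c0 (log T / T)^{1/4} (m0 + 1) M_θ. -/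

import Mathlib

open MeasureTheory ProbabilityTheory Filter Finset
open scoped ENNReal NNReal Classical Topology

noncomputable section

namespace SB

variable {Ω : Type*} [MeasureSpace Ω]

/-- Euclidean (L²) norm of a finite real vector. -/
def gnorm {n : Type*} [Fintype n] (v : n → ℝ) : ℝ := Real.sqrt (∑ i, v i ^ 2)

/-- Squared Euclidean norm. -/
def sqnorm {n : Type*} [Fintype n] (v : n → ℝ) : ℝ := ∑ i, v i ^ 2

/-- Frobenius norm of a matrix. -/
def matnorm {m n : Type*} [Fintype m] [Fintype n] (A : Matrix m n ℝ) : ℝ :=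
  Real.sqrt (∑ i, ∑ j, A i j ^ 2)

/-- An i.i.d. sequence indexed by ℤ. -/
def IsIID {E : Type*} [MeasurableSpace E] (ξ : ℤ → Ω → E) : Prop :=
  iIndepFun ξ ℙ ∧ ∀ i j : ℤ, IdentDistrib (ξ i) (ξ j) ℙ ℙ

/-- A square 0/1-matrix which is orthogonal (a permutation matrix), as is the
commutation matrix `K`. -/
def IsPermMatrix {n : Type*} [Fintype n] [DecidableEq n] (K : Matrix n n ℝ) : Prop :=
  (∀ i j, K i j = 0 ∨ K i j = 1) ∧ K * K.transpose = 1

/-- Coefficient index set: equation index × regressor index; its cardinality is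
`d = q (r + 2 + s)`. -/
abbrev cIdx (q r s : ℕ) := Fin q × Fin (r + 2 + s)

/-- Assumption 1 of the paper: linear-process errors with i.i.d. innovations having
finite `4 + a` moments, full-rank long-run matrices, one-summable coefficients, a
mean-zero second-order stationary `w` with uniformly bounded `4 + a` moments, and
uniform `4 + ε` moment bounds for the scaled partial sums of `X·u` and `w·u`. -/
def Assumption1 (q r s : ℕ)
    (u : ℕ → Ω → Fin q → ℝ) (ξ : ℕ → Ω → Fin r → ℝ)
    (X : ℕ → Ω → Fin r → ℝ) (w : ℕ → Ω → Fin s → ℝ) : Prop :=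
  ∃ (a : ℝ) (ε : ℤ → Ω → Fin q → ℝ) (e : ℤ → Ω → Fin r → ℝ)
    (C : ℕ → Matrix (Fin q) (Fin q) ℝ) (D : ℕ → Matrix (Fin r) (Fin r) ℝ),
    0 < a ∧
    IsIID (fun t ω => (ε t ω, e t ω)) ∧
    (∫⁻ ω, ENNReal.ofReal ((gnorm (ε 0 ω) + gnorm (e 0 ω)) ^ (4 + a)) ∂ℙ) < ⊤ ∧
    (∀ t ω, u t ω = ∑' j : ℕ, (C j).mulVec (ε ((t : ℤ) - (j : ℤ)) ω)) ∧
    (∀ t ω, ξ t ω = ∑' j : ℕ, (D j).mulVec (e ((t : ℤ) - (j : ℤ)) ω)) ∧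
    (∀ t ω, X (t + 1) ω = X t ω + ξ (t + 1) ω) ∧
    (∑' j : ℕ, C j).rank = q ∧ (∑' j : ℕ, D j).rank = r ∧
    Summable (fun j : ℕ => (j : ℝ) * matnorm (C j)) ∧
    Summable (fun j : ℕ => (j : ℝ) * matnorm (D j)) ∧
    (∀ t l, ∫ ω, w t ω l ∂ℙ = 0) ∧
    (∀ t t' h l l', ∫ ω, w t ω l * w (t + h) ω l' ∂ℙ
        = ∫ ω, w t' ω l * w (t' + h) ω l' ∂ℙ) ∧
    (∃ Mw : ℝ, ∀ t l,
      (∫⁻ ω, ENNReal.ofReal (|w t ω l| ^ (4 + a)) ∂ℙ) ≤ ENNReal.ofReal Mw) ∧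
    (∃ ε' : ℝ, 0 < ε' ∧
      (∃ MX : ℝ, ∀ T : ℕ, 1 ≤ T → ∀ t, 1 ≤ t → t ≤ T → ∀ (l : Fin r) (j : Fin q),
        (∫⁻ ω, ENNReal.ofReal
            (|(1 / (T : ℝ)) * ∑ i ∈ Icc 1 t, X i ω l * u i ω j| ^ (4 + ε')) ∂ℙ)
          ≤ ENNReal.ofReal MX) ∧
      (∃ Mwu : ℝ, ∀ T : ℕ, 1 ≤ T → ∀ t, 1 ≤ t → t ≤ T → ∀ (l : Fin s) (j : Fin q),
        (∫⁻ ω, ENNReal.ofReal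
            (|(1 / (T : ℝ)) * ∑ i ∈ Icc 1 t, w i ω l * u i ω j| ^ (4 + ε')) ∂ℙ)
          ≤ ENNReal.ofReal Mwu))

/-- Assumption 2: the error process is independent of the regressors at all leads
and lags. -/
def Assumption2 (q r s : ℕ) (u : ℕ → Ω → Fin q → ℝ)
    (X : ℕ → Ω → Fin r → ℝ) (w : ℕ → Ω → Fin s → ℝ) : Prop :=
  IndepFun (fun ω (t : ℕ) => u t ω) (fun ω (t : ℕ) => (X t ω, w t ω)) ℙ

/-- Assumption 3: uniformly bounded first moments of the self-normalized squares. -/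
def Assumption3 (r s : ℕ) (X : ℕ → Ω → Fin r → ℝ) (w : ℕ → Ω → Fin s → ℝ) : Prop :=
  ∃ MX Mw : ℝ,
    (∀ t : ℕ, 1 ≤ t → ∀ l, ∫ ω, (t : ℝ) * (X t ω l) ^ 2 /
        (∑ i ∈ Icc 1 t, (X i ω l) ^ 2) ∂ℙ ≤ MX) ∧
    (∀ t : ℕ, 1 ≤ t → ∀ l, ∫ ω, (t : ℝ) * (w t ω l) ^ 2 /
        (∑ i ∈ Icc 1 t, (w i ω l) ^ 2) ∂ℙ ≤ Mw)

/-- The scaled regressor vector `Z_t = (T^{-1/2} X_t', T^{-1} t, 1, w_t')'`. -/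
def Zreg (r s : ℕ) (T : ℕ) (X : ℕ → Ω → Fin r → ℝ) (w : ℕ → Ω → Fin s → ℝ)
    (t : ℕ) (ω : Ω) : Fin (r + 2 + s) → ℝ := fun k =>
  if h1 : (k : ℕ) < r then X t ω ⟨k, h1⟩ / Real.sqrt T
  else if h2 : (k : ℕ) = r then (t : ℝ) / T
  else if h3 : (k : ℕ) = r + 1 then 1
  else w t ω ⟨(k : ℕ) - (r + 2), by have := k.isLt; omega⟩

/-- `Z̄_t = Z_t' ⊗ I_q`, viewed as a `q × d` matrix with column index `(equation,
regressor)`. -/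
def Zbar (q r s T : ℕ) (X : ℕ → Ω → Fin r → ℝ) (w : ℕ → Ω → Fin s → ℝ)
    (t : ℕ) (ω : Ω) : Matrix (Fin q) (cIdx q r s) ℝ :=
  fun i p => if i = p.1 then Zreg r s T X w t ω p.2 else 0

/-- The fitted value `Z̄_t K' (∑_{i ≤ t} θ_i)` of the cumulative structural-break
parametrization at time `t`. -/
def fit (q r s T : ℕ) (X : ℕ → Ω → Fin r → ℝ) (w : ℕ → Ω → Fin s → ℝ)
    (K : Matrix (cIdx q r s) (cIdx q r s) ℝ) (θ : ℕ → cIdx q r s → ℝ)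
    (t : ℕ) (ω : Ω) : Fin q → ℝ :=
  (Zbar q r s T X w t ω).mulVec (K.transpose.mulVec (∑ i ∈ Icc 1 t, θ i))

/-- The structural-break data-generating process with `m0` true breaks at
`t0 1 < ⋯ < t0 m0` (with `t0 0 = 1` and `t0 (m0+1) = T+1`):
`Y_t = Z̄_t K' ∑_{j : t0 j ≤ t} θ0 j + u_t`. -/
def TrueModel (q r s T m0 : ℕ)
    (Y u : ℕ → Ω → Fin q → ℝ) (X : ℕ → Ω → Fin r → ℝ) (w : ℕ → Ω → Fin s → ℝ)
    (K : Matrix (cIdx q r s) (cIdx q r s) ℝ)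
    (t0 : ℕ → ℕ) (θ0 : ℕ → cIdx q r s → ℝ) : Prop :=
  t0 0 = 1 ∧ (∀ j ≤ m0, t0 j < t0 (j + 1)) ∧ t0 (m0 + 1) = T + 1 ∧
  (∀ j ≤ m0, θ0 j ≠ 0) ∧
  ∀ t ω, 1 ≤ t → t ≤ T →
    Y t ω = (Zbar q r s T X w t ω).mulVec
        (K.transpose.mulVec (∑ j ∈ range (m0 + 1), if t0 j ≤ t then θ0 j else 0))
      + u t ω

/-- The blocks of the true stacked coefficient vector `θ⁰(T)`: block `i` is `θ0 j`
if `i = t0 j` and `0` otherwise. -/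
def trueBlocks {ι : Type*} [Fintype ι] (m0 : ℕ) (t0 : ℕ → ℕ) (θ0 : ℕ → ι → ℝ) :
    ℕ → ι → ℝ :=
  fun i => ∑ j ∈ range (m0 + 1), if t0 j = i then θ0 j else 0

/-- The group-LASSO objective
`Q*(θ) = T⁻¹ ∑_{t=1}^T ‖Y_t − Z̄_t K' ∑_{i≤t} θ_i‖² + λ ∑_{i=1}^T ‖θ_i‖`. -/
def Qobj (q r s T : ℕ) (Y : ℕ → Ω → Fin q → ℝ) (X : ℕ → Ω → Fin r → ℝ)
    (w : ℕ → Ω → Fin s → ℝ) (K : Matrix (cIdx q r s) (cIdx q r s) ℝ)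
    (lam : ℝ) (ω : Ω) (θ : ℕ → cIdx q r s → ℝ) : ℝ :=
  (1 / (T : ℝ)) * ∑ t ∈ Icc 1 T, sqnorm (Y t ω - fit q r s T X w K θ t ω)
    + lam * ∑ i ∈ Icc 1 T, gnorm (θ i)

/-- The rate `(log T / T)^{1/4}`. -/
def rate (T : ℕ) : ℝ := (Real.log T / T) ^ ((1 : ℝ) / 4)

/-- The tuning parameter `λ_T = 2 d c₀ (log T / T)^{1/4}`. -/
def lamT (d : ℕ) (c0 : ℝ) (T : ℕ) : ℝ := 2 * d * c0 * rate T

/-- Minimum regime length `min_{1 ≤ j ≤ m0+1} (t0 j − t0 (j−1))`. -/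
def minGap (m0 : ℕ) (t0 : ℕ → ℕ) : ℕ :=
  (Finset.Icc 1 (m0 + 1)).inf' (Finset.nonempty_Icc.mpr (by omega))
    (fun j => t0 j - t0 (j - 1))

/-- Assumption 5: break magnitudes bounded away from `0` and above, and regime
lengths of larger order than `T γ_T`, with `γ_T → 0` and `γ_T / λ_T → ∞`. -/
def Assumption5 {ι : Type*} [Fintype ι] (m0 : ℕ) (t0 : ℕ → ℕ → ℕ)
    (θ0 : ℕ → ℕ → ι → ℝ) (ν Mθ : ℝ) (γ lam : ℕ → ℝ) : Prop :=
  0 < ν ∧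
  (∀ T j, j ≤ m0 → ν ≤ gnorm (θ0 T j) ∧ gnorm (θ0 T j) ≤ Mθ) ∧
  Tendsto γ atTop (𝓝 0) ∧
  Tendsto (fun T => γ T / lam T) atTop atTop ∧
  Tendsto (fun T : ℕ => (minGap m0 (t0 T) : ℝ) / (T * γ T)) atTop atTop

/-- The set `𝒜_T = {2 ≤ i ≤ T : θ̂_i ≠ 0}` of estimated breakpoints. -/
def ATset (T : ℕ) {ι : Type*} (θ : ℕ → ι → ℝ) : Finset ℕ :=
  (Icc 2 T).filter fun i => θ i ≠ 0

/-- One-sided Hausdorff distance `d_H(A, B) = max_{b ∈ B} min_{a ∈ A} |b − a|`,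
with the convention that it equals `1` if either set is empty. -/
def dH (A B : Finset ℕ) : ℝ :=
  if h : A.Nonempty ∧ B.Nonempty then
    B.sup' h.2 fun b => A.inf' h.1 fun a => (Nat.dist b a : ℝ)
  else 1

/-- Segment endpoints for candidate breaks `t 1 < ⋯ < t m`, with the convention
`t 0 = 1`, `t (m+1) = T + 1`. -/
def segpt (T m : ℕ) (t : ℕ → ℕ) (j : ℕ) : ℕ :=
  if j = 0 then 1 else if j ≤ m then t j else T + 1

/-- Sum of squared residuals `S_T(t_1, …, t_m)`, minimized over segment
coefficients. -/
def ST (q r s T : ℕ) (Y : ℕ → Ω → Fin q → ℝ) (X : ℕ → Ω → Fin r → ℝ)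
    (w : ℕ → Ω → Fin s → ℝ) (K : Matrix (cIdx q r s) (cIdx q r s) ℝ)
    (m : ℕ) (t : ℕ → ℕ) (ω : Ω) : ℝ :=
  ⨅ θ : ℕ → cIdx q r s → ℝ,
    ∑ j ∈ range (m + 1),
      ∑ tt ∈ Ico (segpt T m t j) (segpt T m t (j + 1)),
        sqnorm (Y tt ω - (Zbar q r s T X w tt ω).mulVec
          (K.transpose.mulVec (∑ i ∈ range (j + 1), θ i)))

/-- Information criterion `IC(m, t) = S_T(t_1, …, t_m) + m ω_T`. -/
def IC (q r s T : ℕ) (Y : ℕ → Ω → Fin q → ℝ) (X : ℕ → Ω → Fin r → ℝ)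
    (w : ℕ → Ω → Fin s → ℝ) (K : Matrix (cIdx q r s) (cIdx q r s) ℝ)
    (ωpen : ℝ) (m : ℕ) (t : ℕ → ℕ) (ω : Ω) : ℝ :=
  ST q r s T Y X w K m t ω + m * ωpen

/-- A valid second-step candidate: `1 ≤ m ≤ |A|` breakpoints, strictly increasing,
all taken from the first-step set `A`. -/
def ValidCand (A : Finset ℕ) (m : ℕ) (t : ℕ → ℕ) : Prop :=
  1 ≤ m ∧ m ≤ A.card ∧ (∀ j, 1 ≤ j → j ≤ m → t j ∈ A) ∧
    StrictMonoOn t (Set.Icc 1 m)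

end SB

namespace SB

private lemma gnorm_eq_norm {n : Type*} [Fintype n] (v : n → ℝ) :
    gnorm v = ‖(WithLp.equiv 2 (n → ℝ)).symm v‖ := by
  rw [EuclideanSpace.norm_eq]
  simp [gnorm, sq_abs]

private lemma gnorm_nonneg {n : Type*} [Fintype n] (v : n → ℝ) : 0 ≤ gnorm v :=
  Real.sqrt_nonneg _

private lemma gnorm_sub_le {n : Type*} [Fintype n] (a b : n → ℝ) :
    gnorm (a - b) ≤ gnorm a + gnorm b := by
  simp only [gnorm_eq_norm]
  rw [show (WithLp.equiv 2 (n → ℝ)).symm (a - b)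
      = (WithLp.equiv 2 (n → ℝ)).symm a - (WithLp.equiv 2 (n → ℝ)).symm b from rfl]
  exact norm_sub_le _ _

private lemma abs_le_gnorm {n : Type*} [Fintype n] (v : n → ℝ) (l : n) :
    |v l| ≤ gnorm v := by
  rw [← Real.sqrt_sq_eq_abs]
  exact Real.sqrt_le_sqrt (Finset.single_le_sum (fun i _ => sq_nonneg (v i))
    (Finset.mem_univ l))

private lemma sqnorm_sub {n : Type*} [Fintype n] (a b : n → ℝ) :
    sqnorm (a - b) = sqnorm a - 2 * ∑ j, a j * b j + sqnorm b := by
  simp only [sqnorm, Pi.sub_apply]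
  rw [Finset.mul_sum, ← Finset.sum_sub_distrib, ← Finset.sum_add_distrib]
  exact Finset.sum_congr rfl fun j _ => by ring

/-- Deterministic core of Theorem 1: prediction error bound for the group LASSO
on the good event where all entries of `ZᵀU/T` are small. -/
theorem theorem1_deterministic_core
    {N T d : ℕ} (hN : 0 < N) (hd : 0 < d) (hT : 2 ≤ T)
    (m0 : ℕ) (c0 Mθ : ℝ) (hc0 : 0 < c0) (hMθ : 0 < Mθ)
    (Y : Fin N → ℝ) (Z : Matrix (Fin N) (Fin T × Fin d) ℝ)
    (θhat θzero : Fin T × Fin d → ℝ)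
    (hsparse : ((Finset.univ : Finset (Fin T)).filter
        (fun i => (fun l => θzero (i, l)) ≠ 0)).card ≤ m0 + 1)
    (hbound : ∀ i : Fin T, gnorm (fun l => θzero (i, l)) ≤ Mθ)
    (hgood : ∀ p : Fin T × Fin d,
      |Z.transpose.mulVec (Y - Z.mulVec θzero) p| / T ≤ c0 * rate T)
    (hmin : ∀ θ : Fin T × Fin d → ℝ,
      (1 / (T : ℝ)) * sqnorm (Y - Z.mulVec θhat)
          + lamT d c0 T * ∑ i : Fin T, gnorm (fun l => θhat (i, l))
        ≤ (1 / (T : ℝ)) * sqnorm (Y - Z.mulVec θ)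
          + lamT d c0 T * ∑ i : Fin T, gnorm (fun l => θ (i, l))) :
    (1 / (T : ℝ)) * sqnorm (Z.mulVec (θhat - θzero))
      ≤ 4 * (d : ℝ) * c0 * rate T * (m0 + 1) * Mθ := by
  have hTpos : (0 : ℝ) < T := by exact_mod_cast lt_of_lt_of_le (by norm_num) hT
  have hT1 : (1 : ℝ) ≤ T := by exact_mod_cast le_trans (by norm_num) hT
  have hr : 0 ≤ rate T :=
    Real.rpow_nonneg (div_nonneg (Real.log_nonneg hT1) hTpos.le) _
  set U : Fin N → ℝ := Y - Z.mulVec θzero with hU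
  set δ : Fin T × Fin d → ℝ := θhat - θzero with hδ
  have hZδ : Y - Z.mulVec θhat = U - Z.mulVec δ := by
    rw [hU, hδ, Matrix.mulVec_sub]; abel
  set D : ℝ := ∑ p, Z.transpose.mulVec U p * δ p with hD
  have hdot : ∑ j, U j * Z.mulVec δ j = D := by
    rw [hD]
    calc ∑ j, U j * Z.mulVec δ j = dotProduct U (Z.mulVec δ) := rfl
      _ = dotProduct (Z.vecMul U) δ := Matrix.dotProduct_mulVec _ _ _
      _ = ∑ p, Z.transpose.mulVec U p * δ p := by
          rw [Matrix.mulVec_transpose]; rfl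
  -- basic inequality
  have hbasic := hmin θzero
  rw [hZδ, sqnorm_sub, hdot] at hbasic
  -- bound on the cross term
  have hDbound : (2 / (T : ℝ)) * D ≤ lamT d c0 T * ∑ i : Fin T, gnorm (fun l => δ (i, l)) := by
    have h1 : D ≤ ∑ p, (c0 * rate T * T) * |δ p| := by
      refine Finset.sum_le_sum fun p _ => ?_
      calc Z.transpose.mulVec U p * δ p ≤ |Z.transpose.mulVec U p * δ p| := le_abs_self _
        _ = |Z.transpose.mulVec U p| * |δ p| := abs_mul _ _
        _ ≤ (c0 * rate T * T) * |δ p| := by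
            refine mul_le_mul_of_nonneg_right ?_ (abs_nonneg _)
            have := hgood p
            rw [div_le_iff₀ hTpos] at this
            simpa [hU] using this
    have h2 : ∑ p, |δ p| ≤ (d : ℝ) * ∑ i : Fin T, gnorm (fun l => δ (i, l)) := by
      rw [Fintype.sum_prod_type, Finset.mul_sum]
      refine Finset.sum_le_sum fun i _ => ?_
      calc ∑ l, |δ (i, l)| ≤ ∑ _l : Fin d, gnorm (fun l => δ (i, l)) :=
            Finset.sum_le_sum fun l _ => abs_le_gnorm (fun l => δ (i, l)) l
        _ = (d : ℝ) * gnorm (fun l => δ (i, l)) := by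
            rw [Finset.sum_const]; simp [nsmul_eq_mul]
    calc (2 / (T : ℝ)) * D ≤ (2 / (T : ℝ)) * ∑ p, (c0 * rate T * T) * |δ p| :=
          mul_le_mul_of_nonneg_left h1 (by positivity)
      _ = 2 * c0 * rate T * ∑ p, |δ p| := by
          rw [← Finset.mul_sum]; field_simp
      _ ≤ 2 * c0 * rate T * ((d : ℝ) * ∑ i : Fin T, gnorm (fun l => δ (i, l))) :=
          mul_le_mul_of_nonneg_left h2 (by positivity)
      _ = lamT d c0 T * ∑ i : Fin T, gnorm (fun l => δ (i, l)) := by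
          rw [lamT]; ring
  -- blockwise bound
  have hblock : ∑ i : Fin T, (gnorm (fun l => δ (i, l)) + gnorm (fun l => θzero (i, l))
      - gnorm (fun l => θhat (i, l))) ≤ 2 * (m0 + 1 : ℝ) * Mθ := by
    have h3 : ∀ i : Fin T, gnorm (fun l => δ (i, l)) + gnorm (fun l => θzero (i, l))
        - gnorm (fun l => θhat (i, l))
        ≤ if (fun l => θzero (i, l)) ≠ 0 then 2 * Mθ else 0 := by
      intro i
      by_cases hz : (fun l => θzero (i, l)) = 0
      · have hδi : (fun l => δ (i, l)) = fun l => θhat (i, l) := by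
          funext l
          have : θzero (i, l) = 0 := congrFun hz l
          simp [hδ, this]
        have h0 : ∀ l, θzero (i, l) = 0 := fun l => congrFun hz l
        have e1 : gnorm (fun l => θzero (i, l)) = 0 := by simp [gnorm, h0]
        have e2 : gnorm (fun l => δ (i, l)) = gnorm (fun l => θhat (i, l)) := by
          rw [hδi]
        rw [if_neg (not_not_intro hz)]
        linarith
      · have htri : gnorm (fun l => δ (i, l))
            ≤ gnorm (fun l => θhat (i, l)) + gnorm (fun l => θzero (i, l)) := by
          have : (fun l => δ (i, l))
              = (fun l => θhat (i, l)) - (fun l => θzero (i, l)) := by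
            funext l; simp [hδ]
          rw [this]; exact gnorm_sub_le _ _
        have := hbound i
        simp only [hz, ne_eq, not_false_eq_true, if_true]
        linarith
    calc ∑ i : Fin T, (gnorm (fun l => δ (i, l)) + gnorm (fun l => θzero (i, l))
          - gnorm (fun l => θhat (i, l)))
        ≤ ∑ i : Fin T, if (fun l => θzero (i, l)) ≠ 0 then 2 * Mθ else 0 :=
          Finset.sum_le_sum fun i _ => h3 i
      _ = ((Finset.univ : Finset (Fin T)).filter
            (fun i => (fun l => θzero (i, l)) ≠ 0)).card * (2 * Mθ) := by
          rw [← Finset.sum_filter, Finset.sum_const, nsmul_eq_mul]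
      _ ≤ (m0 + 1 : ℝ) * (2 * Mθ) := by
          refine mul_le_mul_of_nonneg_right ?_ (by positivity)
          exact_mod_cast hsparse
      _ = 2 * (m0 + 1 : ℝ) * Mθ := by ring
  have hlam : 0 ≤ lamT d c0 T := by
    rw [lamT]; positivity
  have hfin : lamT d c0 T * ∑ i : Fin T, (gnorm (fun l => δ (i, l))
      + gnorm (fun l => θzero (i, l)) - gnorm (fun l => θhat (i, l)))
      ≤ lamT d c0 T * (2 * (m0 + 1 : ℝ) * Mθ) :=
    mul_le_mul_of_nonneg_left hblock hlam
  have hexpand : (1 / (T : ℝ)) * (sqnorm U - 2 * D + sqnorm (Z.mulVec δ))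
      = (1 / (T : ℝ)) * sqnorm U - (2 / (T : ℝ)) * D
        + (1 / (T : ℝ)) * sqnorm (Z.mulVec δ) := by ring
  rw [hexpand] at hbasic
  have hsum : ∑ i : Fin T, (gnorm (fun l => δ (i, l)) + gnorm (fun l => θzero (i, l))
      - gnorm (fun l => θhat (i, l)))
      = ∑ i : Fin T, gnorm (fun l => δ (i, l)) + ∑ i : Fin T, gnorm (fun l => θzero (i, l))
        - ∑ i : Fin T, gnorm (fun l => θhat (i, l)) := by
    rw [Finset.sum_sub_distrib, Finset.sum_add_distrib]
  rw [hsum, mul_sub, mul_add] at hfin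
  have hrhs : lamT d c0 T * (2 * (m0 + 1 : ℝ) * Mθ)
      = 4 * (d : ℝ) * c0 * rate T * (m0 + 1 : ℝ) * Mθ := by
    rw [lamT]; ring
  push_cast at hrhs ⊢
  linarith

end SB
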